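/- Let T be a nonnegative random variable with E[e^{qT}] < ∞ for q > 0. Then the capacities λ̄₁ = q/(e^{q E[T]} - 1), λ̄₂ = q/((E[e^{-qT}])^{-1} - 1), λ̄₃ = q/(E[e^{qT}] - 1) satisfy λ̄₂ ≥ λ̄₁ ≥ λ̄₃, where T is assumed non-degenerate so all denominators are positive. -/

import Mathlib

open MeasureTheory Real

/-- Ordering of the capacities: `λ̄₂ ≥ λ̄₁ ≥ λ̄₃`, where
`λ̄₁ = q/(e^{q E[T]} - 1)`, `λ̄₂ = q/((E[e^{-qT}])⁻¹ - 1)`, `λ̄₃ = q/(E[e^{qT}] - 1)`,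
for a nonnegative non-degenerate `T` with finite mgf at `q`. -/
theorem capacity_ordering {Ω : Type*} [MeasurableSpace Ω] (μ : Measure Ω)
    [IsProbabilityMeasure μ] (T : Ω → ℝ) (q : ℝ) (hq : 0 < q)
    (hTnn : ∀ ω, 0 ≤ T ω)
    (hTmeas : Measurable T)
    (hTint : Integrable T μ)
    (hmgf : Integrable (fun ω => Real.exp (q * T ω)) μ)
    (hpos : 0 < μ {ω | 0 < T ω}) :
    q / ((∫ ω, Real.exp (-q * T ω) ∂μ)⁻¹ - 1) ≥ q / (Real.exp (q * ∫ ω, T ω ∂μ) - 1) ∧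
    q / (Real.exp (q * ∫ ω, T ω ∂μ) - 1) ≥ q / ((∫ ω, Real.exp (q * T ω) ∂μ) - 1) := by
  set m := ∫ ω, T ω ∂μ with hm
  -- m > 0
  have hsub : {ω | 0 < T ω} ⊆ Function.support T := by
    intro ω hω; exact ne_of_gt hω
  have hmpos : 0 < m := by
    rw [hm, integral_pos_iff_support_of_nonneg hTnn hTint]
    exact lt_of_lt_of_le hpos (measure_mono hsub)
  -- integrability of exp(-qT)
  have hbd : ∀ ω, Real.exp (-q * T ω) ≤ 1 := fun ω =>
    Real.exp_le_one_iff.2 (by nlinarith [hTnn ω])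
  have hnegint : Integrable (fun ω => Real.exp (-q * T ω)) μ := by
    refine (integrable_const (1 : ℝ)).mono' ?_ ?_
    · exact ((hTmeas.const_mul (-q)).exp).aestronglyMeasurable
    · filter_upwards with ω
      rw [Real.norm_eq_abs, abs_of_pos (Real.exp_pos _)]
      exact hbd ω
  set I := ∫ ω, Real.exp (-q * T ω) ∂μ with hI
  have hI0 : 0 < I := integral_exp_pos hnegint
  have hI1 : I < 1 := by
    have hdiff : 0 < ∫ ω, (1 - Real.exp (-q * T ω)) ∂μ := by
      rw [integral_pos_iff_support_of_nonneg
        (fun ω => sub_nonneg.2 (hbd ω)) ((integrable_const 1).sub hnegint)]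
      refine lt_of_lt_of_le hpos (measure_mono ?_)
      intro ω hω
      have hlt : Real.exp (-q * T ω) < 1 :=
        Real.exp_lt_one_iff.2 (by nlinarith [Set.mem_setOf_eq ▸ hω])
      simp only [Function.mem_support]
      exact ne_of_gt (sub_pos.2 hlt)
    rw [integral_sub (integrable_const 1) hnegint, integral_const, probReal_univ,
      smul_eq_mul, one_mul] at hdiff
    linarith
  -- Jensen: exp(-q m) ≤ I and exp(q m) ≤ ∫ exp(qT)
  have hjensen : ∀ c : ℝ, Integrable (fun ω => Real.exp (c * T ω)) μ →
      Real.exp (c * m) ≤ ∫ ω, Real.exp (c * T ω) ∂μ := by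
    intro c hc
    have := convexOn_exp.map_integral_le (μ := μ) (f := fun ω => c * T ω)
      Real.continuous_exp.continuousOn isClosed_univ
      (Filter.Eventually.of_forall fun ω => Set.mem_univ _)
      (hTint.const_mul c) (by exact hc)
    rwa [integral_const_mul] at this
  have hJdown : Real.exp (-q * m) ≤ I := hjensen (-q) hnegint
  have hJup : Real.exp (q * m) ≤ ∫ ω, Real.exp (q * T ω) ∂μ := hjensen q hmgf
  have hqm1 : 1 < Real.exp (q * m) := by
    rw [← Real.exp_zero]
    exact Real.exp_lt_exp.2 (by positivity)
  have hIinv : I⁻¹ ≤ Real.exp (q * m) := by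
    have h1 : I⁻¹ ≤ (Real.exp (-q * m))⁻¹ := inv_anti₀ (Real.exp_pos _) hJdown
    rwa [← Real.exp_neg, neg_mul, neg_neg] at h1
  have hIinv1 : 1 < I⁻¹ := by
    rw [← inv_one]
    exact inv_strictAnti₀ hI0 hI1
  constructor
  · exact div_le_div_of_nonneg_left hq.le (by linarith) (by linarith)
  · exact div_le_div_of_nonneg_left hq.le (by linarith) (by linarith)
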